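/- Every graph G with Δ(G) ≥ 1 is proportionally k-choosable for k = Δ(G) + ⌈|V(G)|/2⌉; that is, χ_pc(G) ≤ Δ(G) + ⌈|V(G)|/2⌉. -/

import Mathlib

open Finset

/-- The multiplicity of a color `c` in a list assignment `L`: the number of
vertices whose list contains `c`. -/
def eta {V : Type*} [Fintype V] (L : V → Finset ℕ) (c : ℕ) : ℕ :=
  (Finset.univ.filter fun v => c ∈ L v).card

/-- `f` is a proportional `L`-coloring of `G` (with lists of size `k`): a proper
`L`-coloring in which each color `c` of the palette is used `⌊η(c)/k⌋` or `⌈η(c)/k⌉` times. -/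
def IsProportionalColoring {V : Type*} [Fintype V] (G : SimpleGraph V) (k : ℕ)
    (L : V → Finset ℕ) (f : V → ℕ) : Prop :=
  (∀ v, f v ∈ L v) ∧ (∀ u v, G.Adj u v → f u ≠ f v) ∧
  ∀ c, (∃ v, c ∈ L v) →
    (Finset.univ.filter fun v => f v = c).card = eta L c / k ∨
    (Finset.univ.filter fun v => f v = c).card = (eta L c + k - 1) / k

/-- `G` is proportionally `k`-choosable: every `k`-assignment admits a proportional coloring. -/
def ProportionallyChoosable {V : Type*} [Fintype V] (G : SimpleGraph V) (k : ℕ) : Prop :=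
  ∀ L : V → Finset ℕ, (∀ v, (L v).card = k) → ∃ f : V → ℕ, IsProportionalColoring G k L f

set_option linter.unusedSectionVars false

section Aux

variable {V : Type*} [Fintype V]

lemma double_count (W : Finset V) (L : V → Finset ℕ) (D : Finset ℕ)
    (h : ∀ v ∈ W, L v ⊆ D) :
    ∑ v ∈ W, (L v).card = ∑ c ∈ D, (W.filter fun v => c ∈ L v).card := by
  classical
  calc ∑ v ∈ W, (L v).card
      = ∑ v ∈ W, ∑ c ∈ D, (if c ∈ L v then 1 else 0) := by
        refine Finset.sum_congr rfl fun v hv => ?_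
        rw [← Finset.card_filter, Finset.filter_mem_eq_inter,
          Finset.inter_eq_right.mpr (h v hv)]
    _ = ∑ c ∈ D, ∑ v ∈ W, (if c ∈ L v then 1 else 0) := Finset.sum_comm
    _ = ∑ c ∈ D, (W.filter fun v => c ∈ L v).card := by
        refine Finset.sum_congr rfl fun c _ => (Finset.card_filter _ _).symm

/-- The slots associated to a set `D` of colors: one slot `(c, false)` for each
`c ∈ D`, and an extra slot `(c, true)` for each heavy `c ∈ D`. -/
def Slots {V : Type*} [Fintype V] (k : ℕ) (L : V → Finset ℕ) (D : Finset ℕ) :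
    Finset (ℕ × Bool) :=
  D.image (fun c => (c, false)) ∪ (D.filter fun c => k < eta L c).image (fun c => (c, true))

lemma mem_Slots {k : ℕ} {L : V → Finset ℕ} {D : Finset ℕ} {c : ℕ} {b : Bool} :
    (c, b) ∈ Slots k L D ↔ c ∈ D ∧ (b = true → k < eta L c) := by
  cases b <;> simp [Slots]

lemma Slots_mono {k : ℕ} {L : V → Finset ℕ} {D D' : Finset ℕ} (h : D ⊆ D') :
    Slots k L D ⊆ Slots k L D' := by
  intro p hp
  obtain ⟨c, b⟩ := p
  rw [mem_Slots] at hp ⊢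
  exact ⟨h hp.1, hp.2⟩

lemma card_Slots {k : ℕ} {L : V → Finset ℕ} {D : Finset ℕ} :
    (Slots k L D).card = D.card + (D.filter fun c => k < eta L c).card := by
  rw [Slots, Finset.card_union_of_disjoint, Finset.card_image_of_injective,
    Finset.card_image_of_injective]
  · intro a b hab; exact (Prod.mk.injEq _ _ _ _ ▸ hab).1
  · intro a b hab; exact (Prod.mk.injEq _ _ _ _ ▸ hab).1
  · rw [Finset.disjoint_left]
    rintro p hp hq
    simp only [Finset.mem_image] at hp hq
    obtain ⟨a, _, rfl⟩ := hp
    obtain ⟨b, _, hb⟩ := hq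
    exact Bool.false_ne_true (congrArg Prod.snd hb).symm

lemma Slots_biUnion {k : ℕ} {L : V → Finset ℕ} (W : Finset V) :
    W.biUnion (fun v => Slots k L (L v)) = Slots k L (W.biUnion L) := by
  classical
  ext ⟨c, b⟩
  simp only [Finset.mem_biUnion, mem_Slots]
  constructor
  · rintro ⟨v, hv, hc, hb⟩
    exact ⟨⟨v, hv, hc⟩, hb⟩
  · rintro ⟨⟨v, hv, hcv⟩, hb⟩
    exact ⟨v, hv, hcv, hb⟩

/-- Hall-type counting: a set `W` of vertices has at least `|W|` slots available. -/
lemma hall_count {k : ℕ} (hk : 0 < k) {L : V → Finset ℕ}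
    (hL : ∀ v, (L v).card = k) (hη : ∀ c, eta L c ≤ 2 * k) (W : Finset V) :
    W.card ≤ (Slots k L (W.biUnion L)).card := by
  classical
  set D := W.biUnion L with hD
  have key : k * W.card ≤ k * (Slots k L D).card := by
    calc k * W.card = ∑ v ∈ W, (L v).card := by
          rw [Finset.sum_congr rfl fun v _ => hL v, Finset.sum_const, smul_eq_mul, mul_comm]
      _ = ∑ c ∈ D, (W.filter fun v => c ∈ L v).card := by
          exact double_count W L D fun v hv c hc => Finset.mem_biUnion.mpr ⟨v, hv, hc⟩
      _ ≤ ∑ c ∈ D, (k * if k < eta L c then 2 else 1) := by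
          refine Finset.sum_le_sum fun c _ => ?_
          have h1 : (W.filter fun v => c ∈ L v).card ≤ eta L c := by
            apply Finset.card_le_card
            intro v hv
            simp only [Finset.mem_filter] at hv ⊢
            exact ⟨Finset.mem_univ _, hv.2⟩
          split
          · exact h1.trans ((hη c).trans_eq (by ring))
          · exact h1.trans (by omega)
      _ = k * (Slots k L D).card := by
          rw [card_Slots, ← Finset.mul_sum]
          congr 1
          rw [Finset.sum_ite, Finset.sum_const, Finset.sum_const, smul_eq_mul, smul_eq_mul]
          have : D.card = (D.filter fun c => k < eta L c).card +
              (D.filter fun c => ¬ k < eta L c).card := by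
            rw [Finset.card_filter_add_card_filter_not]
          omega
  exact Nat.le_of_mul_le_mul_left key hk

/-- If every color of `X` is heavy (multiplicity ≥ k) and all its carriers lie in `U`,
then `|X| ≤ |U|`. -/
lemma carriers_bound {k : ℕ} (hk : 0 < k) {L : V → Finset ℕ}
    (hL : ∀ v, (L v).card = k) (X : Finset ℕ) (U : Finset V)
    (hX : ∀ c ∈ X, k ≤ eta L c) (hU : ∀ c ∈ X, ∀ v, c ∈ L v → v ∈ U) :
    X.card ≤ U.card := by
  classical
  have h1 : k * X.card ≤ ∑ c ∈ X, eta L c := by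
    rw [mul_comm, ← smul_eq_mul, ← Finset.sum_const]
    exact Finset.sum_le_sum hX
  have h2 : ∀ c ∈ X, eta L c = (U.filter fun v => c ∈ L v ∩ X).card := by
    intro c hc
    unfold eta
    congr 1
    ext v
    simp only [Finset.mem_filter, Finset.mem_univ, true_and, Finset.mem_inter]
    exact ⟨fun h => ⟨hU c hc v h, h, hc⟩, fun h => h.2.1⟩
  have h3 : ∑ c ∈ X, (U.filter fun v => c ∈ L v ∩ X).card
      = ∑ v ∈ U, (L v ∩ X).card := by
    rw [double_count U (fun v => L v ∩ X) X (fun v _ => Finset.inter_subset_right)]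
  have h4 : ∑ v ∈ U, (L v ∩ X).card ≤ ∑ v ∈ U, k := by
    refine Finset.sum_le_sum fun v _ => ?_
    exact le_of_le_of_eq (Finset.card_le_card Finset.inter_subset_left) (hL v)
  have h5 : ∑ v ∈ U, k = U.card * k := by rw [Finset.sum_const, smul_eq_mul]
  have : k * X.card ≤ U.card * k := by
    calc k * X.card ≤ ∑ c ∈ X, eta L c := h1
      _ = ∑ c ∈ X, (U.filter fun v => c ∈ L v ∩ X).card := Finset.sum_congr rfl h2
      _ = ∑ v ∈ U, (L v ∩ X).card := h3
      _ ≤ U.card * k := h4.trans_eq h5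
  rw [mul_comm] at this
  exact Nat.le_of_mul_le_mul_right this hk

end Aux


/-- Number of vertices colored `c` by `g`. -/
def cnt {V : Type*} [Fintype V] (g : V → ℕ) (c : ℕ) : ℕ :=
  (Finset.univ.filter fun v => g v = c).card

theorem stmt_16 {V : Type*} [Fintype V] (G : SimpleGraph V) [DecidableRel G.Adj]
    (hΔ : 1 ≤ G.maxDegree) :
    ProportionallyChoosable G (G.maxDegree + (Fintype.card V + 1) / 2) := by
  classical
  intro L hL
  set n := Fintype.card V with hn
  set Δ := G.maxDegree with hΔdef
  set m := (n + 1) / 2 with hm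
  set k := Δ + m with hkdef
  -- ## basic facts
  have hne : Nonempty V := by
    by_contra h
    haveI : IsEmpty V := not_nonempty_iff.mp h
    have : Δ = 0 := by
      rw [hΔdef, SimpleGraph.maxDegree]
      simp
    omega
  have hn2 : 2 ≤ n := by
    obtain ⟨v0, hv0⟩ := G.exists_maximal_degree_vertex
    have hdeg0 : 0 < (G.neighborFinset v0).card := by
      have h0 : 0 < G.degree v0 := by omega
      rwa [SimpleGraph.degree] at h0
    obtain ⟨w0, hw0⟩ := Finset.card_pos.mp hdeg0
    have hadj0 : G.Adj v0 w0 := (SimpleGraph.mem_neighborFinset _ _ _).mp hw0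
    exact Fintype.one_lt_card_iff.mpr ⟨v0, w0, hadj0.ne⟩
  have hn2m : n ≤ 2 * m := by omega
  have hk0 : 0 < k := by omega
  have hηn : ∀ c, eta L c ≤ n := fun c =>
    le_trans (Finset.card_filter_le _ _) (by rw [Finset.card_univ])
  have hη2k : ∀ c, eta L c ≤ 2 * k := fun c => by have := hηn c; omega
  set C := Finset.univ.biUnion L with hC
  have hLC : ∀ v, L v ⊆ C := fun v c hc =>
    Finset.mem_biUnion.mpr ⟨v, Finset.mem_univ v, hc⟩
  have hmemC : ∀ c, c ∈ C ↔ 0 < eta L c := by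
    intro c
    rw [hC, eta, Finset.card_pos, Finset.filter_nonempty_iff]
    simp [Finset.mem_biUnion]
  -- ## the Hall system
  set S := Slots k L C with hS
  have hSn : n ≤ S.card := by
    have := hall_count hk0 hL hη2k (Finset.univ : Finset V)
    rwa [Finset.card_univ, ← hn, ← hC, ← hS] at this
  set d := S.card - n with hd
  set Mand := (C.filter fun c => k ≤ eta L c).image (fun c => (c, false)) with hMand
  set t : V ⊕ Fin d → Finset (ℕ × Bool) :=
    Sum.elim (fun v => Slots k L (L v)) (fun _ => S \ Mand) with ht
  have hMandS : Mand ⊆ S := by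
    intro p hp
    obtain ⟨c, hc, rfl⟩ := Finset.mem_image.mp hp
    exact mem_Slots.mpr ⟨(Finset.mem_filter.mp hc).1, by simp⟩
  have htS : ∀ x, t x ⊆ S := by
    rintro (v | i)
    · exact Slots_mono (hLC v)
    · exact Finset.sdiff_subset
  have hhall : ∀ A : Finset (V ⊕ Fin d), A.card ≤ (A.biUnion t).card := by
    intro A
    have hcardA : A.toLeft.card + A.toRight.card = A.card :=
      Finset.card_toLeft_add_card_toRight
    set CW := A.toLeft.biUnion L with hCW
    have hsubL : Slots k L CW ⊆ A.biUnion t := by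
      rw [← Slots_biUnion]
      refine Finset.biUnion_subset.mpr fun v hv => ?_
      exact Finset.subset_biUnion_of_mem t (Finset.mem_toLeft.mp hv)
    by_cases hAd : A.toRight = ∅
    · have h1 : A.card = A.toLeft.card := by rw [← hcardA, hAd]; simp
      rw [h1]
      exact le_trans (hall_count hk0 hL hη2k A.toLeft) (Finset.card_le_card hsubL)
    · obtain ⟨i, hi⟩ := Finset.nonempty_iff_ne_empty.mpr hAd
      have hsubR : S \ Mand ⊆ A.biUnion t :=
        Finset.subset_biUnion_of_mem t (Finset.mem_toRight.mp hi)
      set X := C.filter (fun c => k ≤ eta L c ∧ c ∉ CW) with hX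
      have hXcard : X.card ≤ (Finset.univ \ A.toLeft).card := by
        refine carriers_bound hk0 hL X (Finset.univ \ A.toLeft)
          (fun c hc => (Finset.mem_filter.mp hc).2.1) ?_
        intro c hc v hv
        rw [Finset.mem_sdiff]
        refine ⟨Finset.mem_univ _, fun hvA => ?_⟩
        exact (Finset.mem_filter.mp hc).2.2 (Finset.mem_biUnion.mpr ⟨v, hvA, hv⟩)
      have hXn : X.card + A.toLeft.card ≤ n := by
        have h2 : (Finset.univ \ A.toLeft).card = n - A.toLeft.card := by
          rw [Finset.card_sdiff_of_subset (Finset.subset_univ _), Finset.card_univ]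
        have h3 : A.toLeft.card ≤ n := by
          rw [hn]; exact le_trans (Finset.card_le_univ _) (le_of_eq Finset.card_univ)
        omega
      have hSWS : Slots k L CW ⊆ S := Slots_mono (Finset.biUnion_subset.mpr fun v _ => hLC v)
      have hMSW : (Mand \ Slots k L CW).card ≤ X.card := by
        have hsub : Mand \ Slots k L CW ⊆ X.image (fun c => (c, false)) := by
          intro p hp
          obtain ⟨hp1, hp2⟩ := Finset.mem_sdiff.mp hp
          obtain ⟨c, hc, rfl⟩ := Finset.mem_image.mp hp1
          obtain ⟨hcC, hck⟩ := Finset.mem_filter.mp hc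
          refine Finset.mem_image.mpr ⟨c, ?_, rfl⟩
          refine Finset.mem_filter.mpr ⟨hcC, hck, fun hcCW => ?_⟩
          exact hp2 (mem_Slots.mpr ⟨hcCW, by simp⟩)
        exact le_trans (Finset.card_le_card hsub) Finset.card_image_le
      have hunion : S \ (Mand \ Slots k L CW) ⊆ A.biUnion t := by
        intro p hp
        obtain ⟨hpS, hpn⟩ := Finset.mem_sdiff.mp hp
        by_cases hpSW : p ∈ Slots k L CW
        · exact hsubL hpSW
        · refine hsubR (Finset.mem_sdiff.mpr ⟨hpS, fun hpM => ?_⟩)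
          exact hpn (Finset.mem_sdiff.mpr ⟨hpM, hpSW⟩)
      have hcard1 : (S \ (Mand \ Slots k L CW)).card
          = S.card - (Mand \ Slots k L CW).card := by
        refine Finset.card_sdiff_of_subset fun p hp => hMandS (Finset.mem_sdiff.mp hp).1
      have hbig : S.card - (Mand \ Slots k L CW).card ≤ (A.biUnion t).card := by
        rw [← hcard1]; exact Finset.card_le_card hunion
      have htr : A.toRight.card ≤ d := by
        have := Finset.card_le_univ A.toRight
        rwa [Fintype.card_fin] at this
      have hMSW' : (Mand \ Slots k L CW).card ≤ X.card := hMSW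
      omega
  obtain ⟨f, hfinj, hft⟩ := (Finset.all_card_le_biUnion_card_iff_exists_injective t).mp hhall
  have himg : Finset.univ.image f = S := by
    apply Finset.eq_of_subset_of_card_le
    · intro y hy
      obtain ⟨x, _, rfl⟩ := Finset.mem_image.mp hy
      exact htS x (hft x)
    · rw [Finset.card_image_of_injective _ hfinj, Finset.card_univ, Fintype.card_sum,
        Fintype.card_fin]
      omega
  -- ## extract the initial coloring
  set g : V → ℕ := fun v => (f (Sum.inl v)).1 with hg
  have hgSlots : ∀ v, ((f (Sum.inl v)).1, (f (Sum.inl v)).2) ∈ Slots k L (L v) := by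
    intro v
    rw [Prod.mk.eta]
    exact hft (Sum.inl v)
  have hgL : ∀ v, g v ∈ L v := fun v => (mem_Slots.mp (hgSlots v)).1
  have hg_hi : ∀ c, cnt g c ≤ if k < eta L c then 2 else 1 := by
    intro c
    by_cases hh : k < eta L c
    · rw [if_pos hh]
      have h2 : ({(c, false), (c, true)} : Finset (ℕ × Bool)).card ≤ 2 :=
        le_trans (Finset.card_insert_le _ _) (by simp)
      refine le_trans ?_ h2
      refine Finset.card_le_card_of_injOn (fun v => f (Sum.inl v)) ?_ ?_
      · intro v hv
        have hv' : (f (Sum.inl v)).1 = c := (Finset.mem_filter.mp hv).2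
        show f (Sum.inl v) ∈ _
        rw [← Prod.mk.eta (p := f (Sum.inl v)), hv']
        rcases Bool.dichotomy (f (Sum.inl v)).2 with hb | hb <;> rw [hb] <;> simp
      · intro a _ b _ hab
        exact Sum.inl.inj (hfinj hab)
    · rw [if_neg hh]
      have h2 : ({(c, false)} : Finset (ℕ × Bool)).card = 1 := Finset.card_singleton _
      rw [← h2]
      refine Finset.card_le_card_of_injOn (fun v => f (Sum.inl v)) ?_ ?_
      · intro v hv
        have hv' : (f (Sum.inl v)).1 = c := (Finset.mem_filter.mp hv).2
        have hsnd : (f (Sum.inl v)).2 = false := by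
          rcases Bool.dichotomy (f (Sum.inl v)).2 with hb | hb
          · exact hb
          · have := (mem_Slots.mp (hgSlots v)).2
            rw [hb] at this
            rw [hv'] at this
            exact absurd (this rfl) hh
        show f (Sum.inl v) ∈ _
        rw [Finset.coe_singleton, Set.mem_singleton_iff, ← Prod.mk.eta (p := f (Sum.inl v)), hv', hsnd]
      · intro a _ b _ hab
        exact Sum.inl.inj (hfinj hab)
  have hg_lo : ∀ c, k ≤ eta L c → 1 ≤ cnt g c := by
    intro c hc
    have hcC : c ∈ C := (hmemC c).mpr (by omega)
    have hcS : (c, false) ∈ S := mem_Slots.mpr ⟨hcC, by simp⟩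
    rw [← himg] at hcS
    obtain ⟨x, _, hx⟩ := Finset.mem_image.mp hcS
    cases x with
    | inr i =>
      have hti := hft (Sum.inr i)
      have hMandmem : (c, false) ∈ Mand :=
        Finset.mem_image.mpr ⟨c, Finset.mem_filter.mpr ⟨hcC, hc⟩, rfl⟩
      rw [hx] at hti
      exact absurd hMandmem (Finset.mem_sdiff.mp hti).2
    | inl v =>
      have hgv : g v = c := by rw [hg]; exact congrArg Prod.fst hx
      exact Finset.card_pos.mpr ⟨v, Finset.mem_filter.mpr ⟨Finset.mem_univ _, hgv⟩⟩
  -- ## minimize the number of monochromatic edges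
  set P : (V → ℕ) → Prop := fun g' => (∀ v, g' v ∈ L v) ∧
    ∀ c, (k ≤ eta L c → 1 ≤ cnt g' c) ∧ cnt g' c ≤ if k < eta L c then 2 else 1
    with hP
  set Bd : (V → ℕ) → Finset (V × V) := fun g' =>
    Finset.univ.filter fun p : V × V => G.Adj p.1 p.2 ∧ g' p.1 = g' p.2 with hBd
  have hsne : Set.Nonempty {b | ∃ g' : V → ℕ, P g' ∧ (Bd g').card = b} :=
    ⟨(Bd g).card, g, ⟨hgL, fun c => ⟨hg_lo c, hg_hi c⟩⟩, rfl⟩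
  obtain ⟨g0, hPg0, hBg0⟩ := Nat.sInf_mem hsne
  have hmin : ∀ g', P g' → (Bd g0).card ≤ (Bd g').card := fun g' h =>
    hBg0 ▸ Nat.sInf_le ⟨g', h, rfl⟩
  have hcnt_eq : ∀ (g1 : V → ℕ) (e : ℕ) (T : Finset V),
      (∀ x, g1 x = e ↔ x ∈ T) → cnt g1 e = T.card := by
    intro g1 e T h
    unfold cnt
    congr 1
    ext x
    simp only [Finset.mem_filter, Finset.mem_univ, true_and]
    exact h x
  have hB0 : (Bd g0).card = 0 := by
    by_contra hB
    obtain ⟨p, hp⟩ := Finset.card_pos.mp (Nat.pos_of_ne_zero hB)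
    obtain ⟨u, v⟩ := p
    have hp' := Finset.mem_filter.mp hp
    have hadj : G.Adj u v := hp'.2.1
    have heq : g0 u = g0 v := hp'.2.2
    set c := g0 u with hc
    have huvne : u ≠ v := G.ne_of_adj hadj
    have hsubuv : ({u, v} : Finset V) ⊆ Finset.univ.filter (fun w => g0 w = c) := by
      intro x hx
      rcases Finset.mem_insert.mp hx with rfl | hx
      · exact Finset.mem_filter.mpr ⟨Finset.mem_univ _, rfl⟩
      · rw [Finset.mem_singleton] at hx
        subst hx
        exact Finset.mem_filter.mpr ⟨Finset.mem_univ _, heq.symm⟩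
    have hcnt_le : cnt g0 c ≤ 2 := by
      have := (hPg0.2 c).2
      split at this <;> omega
    have hcnt2 : 2 ≤ cnt g0 c := by
      have h2 := Finset.card_le_card hsubuv
      rwa [Finset.card_pair huvne] at h2
    have hcarr : Finset.univ.filter (fun w => g0 w = c) = {u, v} :=
      (Finset.eq_of_subset_of_card_le hsubuv
        (by rw [Finset.card_pair huvne]; exact hcnt_le)).symm
    have hheavy : k < eta L c := by
      by_contra hcon
      have h2 := (hPg0.2 c).2
      rw [if_neg hcon] at h2
      omega
    have hcarr' : ∀ x, g0 x = c ↔ (x = u ∨ x = v) := by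
      intro x
      constructor
      · intro hx
        have hmem : x ∈ ({u, v} : Finset V) :=
          hcarr ▸ Finset.mem_filter.mpr ⟨Finset.mem_univ _, hx⟩
        simpa using hmem
      · rintro (rfl | rfl)
        · rfl
        · exact heq.symm
    set tnt := (G.neighborFinset u \ {v}).image g0 with htnt
    set Gd := L u \ insert c tnt with hGdd
    have hvNu : v ∈ G.neighborFinset u := (SimpleGraph.mem_neighborFinset _ _ _).mpr hadj
    have htntcard : tnt.card + 1 ≤ Δ := by
      have h1 : tnt.card ≤ (G.neighborFinset u \ {v}).card := Finset.card_image_le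
      have h2 : (G.neighborFinset u \ {v}).card = (G.neighborFinset u).card - 1 := by
        rw [Finset.card_sdiff_of_subset (Finset.singleton_subset_iff.mpr hvNu), Finset.card_singleton]
      have h3 : (G.neighborFinset u).card ≤ Δ := G.degree_le_maxDegree u
      have h4 : 0 < (G.neighborFinset u).card := Finset.card_pos.mpr ⟨v, hvNu⟩
      omega
    have hGdcard : m ≤ Gd.card := by
      have h1 : (insert c tnt).card ≤ tnt.card + 1 := Finset.card_insert_le _ _
      have h2 : (L u).card - (insert c tnt).card ≤ Gd.card :=
        Finset.le_card_sdiff (insert c tnt) (L u)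
      have h3 := hL u
      omega
    have himp : ∀ g1 : V → ℕ, P g1 →
        (∀ q : V × V, q ∈ Bd g1 → q ∈ Bd g0 ∧ q ≠ (u, v)) → False := by
      intro g1 hP1 hsub
      have hss : Bd g1 ⊆ (Bd g0).erase (u, v) := fun q hq =>
        Finset.mem_erase.mpr ⟨(hsub q hq).2, (hsub q hq).1⟩
      have hlt : (Bd g1).card < (Bd g0).card :=
        lt_of_le_of_lt (Finset.card_le_card hss) (Finset.card_erase_lt_of_mem hp)
      exact absurd (hmin g1 hP1) (not_le.mpr hlt)
    have hkey : ∀ c' ∈ Gd, ∃ w, g0 w = c' ∧ (c ∉ L w ∨ w ∈ G.neighborFinset v) := by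
      intro c' hc'
      obtain ⟨hc'Lu, hc'ni⟩ := Finset.mem_sdiff.mp hc'
      have hc'c : c' ≠ c := fun h => hc'ni (Finset.mem_insert.mpr (Or.inl h))
      have huntainted : ∀ x, x ∈ G.neighborFinset u → x ≠ v → g0 x ≠ c' := by
        intro x hx hxv hgx
        refine hc'ni (Finset.mem_insert.mpr (Or.inr ?_))
        exact Finset.mem_image.mpr ⟨x, Finset.mem_sdiff.mpr ⟨hx, by simpa using hxv⟩, hgx⟩
      by_contra hno
      push_neg at hno
      by_cases hcnt0 : cnt g0 c' = 0
      · -- recolor u with the unused color c'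
        have hnoc' : ∀ x, g0 x ≠ c' := by
          intro x hx
          have hmem : x ∈ Finset.univ.filter (fun y => g0 y = c') :=
            Finset.mem_filter.mpr ⟨Finset.mem_univ _, hx⟩
          rw [Finset.card_eq_zero.mp hcnt0] at hmem
          exact absurd hmem (Finset.notMem_empty _)
        set g1 : V → ℕ := Function.update g0 u c' with hg1
        have hv1 : g1 u = c' := Function.update_self _ _ _
        have hv2 : ∀ x, x ≠ u → g1 x = g0 x := fun x hx => Function.update_of_ne hx _ _
        have hP1 : P g1 := by
          constructor
          · intro x
            by_cases hx : x = u
            · subst hx; rw [hv1]; exact hc'Lu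
            · rw [hv2 x hx]; exact hPg0.1 x
          · intro e
            by_cases hec : e = c
            · subst hec
              have h1 : cnt g1 c = ({v} : Finset V).card := by
                refine hcnt_eq g1 c {v} fun x => ?_
                simp only [Finset.mem_singleton]
                by_cases hx : x = u
                · subst hx
                  rw [hv1]
                  exact ⟨fun h => absurd h hc'c, fun h => absurd h huvne⟩
                · rw [hv2 x hx, hcarr' x]
                  constructor
                  · rintro (rfl | rfl)
                    · exact absurd rfl hx
                    · rfl
                  · intro h; exact Or.inr h
              rw [h1, Finset.card_singleton]
              exact ⟨fun _ => le_refl 1, by split <;> omega⟩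
            · by_cases hec' : e = c'
              · rw [hec']
                have h1 : cnt g1 c' = ({u} : Finset V).card := by
                  refine hcnt_eq g1 c' {u} fun x => ?_
                  simp only [Finset.mem_singleton]
                  by_cases hx : x = u
                  · subst hx; rw [hv1]; exact ⟨fun _ => rfl, fun _ => rfl⟩
                  · rw [hv2 x hx]
                    exact ⟨fun h => absurd h (hnoc' x), fun h => absurd h hx⟩
                rw [h1, Finset.card_singleton]
                exact ⟨fun _ => le_refl 1, by split <;> omega⟩
              · have h1 : cnt g1 e = cnt g0 e := by
                  refine hcnt_eq g1 e (Finset.univ.filter fun x => g0 x = e) fun x => ?_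
                  simp only [Finset.mem_filter, Finset.mem_univ, true_and]
                  by_cases hx : x = u
                  · subst hx
                    rw [hv1]
                    constructor
                    · intro h; exact absurd h.symm hec'
                    · intro h; rw [← hc] at h; exact absurd h.symm hec
                  · rw [hv2 x hx]
                rw [h1]; exact hPg0.2 e
        refine himp g1 hP1 ?_
        rintro ⟨x, y⟩ hq
        have hq' := Finset.mem_filter.mp hq
        have hxy : G.Adj x y := hq'.2.1
        have hgeq : g1 x = g1 y := hq'.2.2
        have hxu : x ≠ u := by
          intro hxeq
          rw [hxeq] at hgeq hxy
          have hyu : y ≠ u := (G.ne_of_adj hxy).symm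
          rw [hv1, hv2 y hyu] at hgeq
          exact hnoc' y hgeq.symm
        have hyu : y ≠ u := by
          intro hyeq
          rw [hyeq] at hgeq hxy
          have hxu' : x ≠ u := G.ne_of_adj hxy
          rw [hv1, hv2 x hxu'] at hgeq
          exact hnoc' x hgeq
        rw [hv2 x hxu, hv2 y hyu] at hgeq
        refine ⟨Finset.mem_filter.mpr ⟨Finset.mem_univ _, hxy, hgeq⟩, fun hcontr => ?_⟩
        exact hxu (congrArg Prod.fst hcontr)
      · -- swap the colors of u and a carrier w of c'
        obtain ⟨w, hw⟩ := Finset.card_pos.mp (Nat.pos_of_ne_zero hcnt0)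
        have hww : g0 w = c' := (Finset.mem_filter.mp hw).2
        obtain ⟨hcLw, hwNv⟩ := hno w hww
        have hwu : w ≠ u := fun h => hc'c (by rw [← hww, h, ← hc])
        have hwv : w ≠ v := fun h => hc'c (by rw [← hww, h, ← heq])
        set g1 : V → ℕ := fun x => if x = u then c' else if x = w then c else g0 x with hg1
        have hv1 : g1 u = c' := by rw [hg1]; simp
        have hvw : g1 w = c := by rw [hg1]; simp [hwu]
        have hv2 : ∀ x, x ≠ u → x ≠ w → g1 x = g0 x := by
          intro x h1 h2; rw [hg1]; simp [h1, h2]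
        have hP1 : P g1 := by
          constructor
          · intro x
            by_cases hx : x = u
            · subst hx; rw [hv1]; exact hc'Lu
            · by_cases hxw : x = w
              · subst hxw; rw [hvw]; exact hcLw
              · rw [hv2 x hx hxw]; exact hPg0.1 x
          · intro e
            by_cases hec : e = c
            · subst hec
              have h1 : cnt g1 c = ({v, w} : Finset V).card := by
                refine hcnt_eq g1 c {v, w} fun x => ?_
                simp only [Finset.mem_insert, Finset.mem_singleton]
                by_cases hx : x = u
                · subst hx
                  rw [hv1]
                  constructor
                  · intro h; exact absurd h hc'c
                  · rintro (rfl | rfl)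
                    · exact absurd rfl huvne
                    · exact absurd rfl (Ne.symm hwu)
                · by_cases hxw : x = w
                  · subst hxw
                    rw [hvw]
                    exact ⟨fun _ => Or.inr rfl, fun _ => rfl⟩
                  · rw [hv2 x hx hxw, hcarr' x]
                    constructor
                    · rintro (rfl | rfl)
                      · exact absurd rfl hx
                      · exact Or.inl rfl
                    · rintro (rfl | rfl)
                      · exact Or.inr rfl
                      · exact absurd rfl hxw
              rw [h1, Finset.card_pair (Ne.symm hwv)]
              refine ⟨fun _ => by omega, ?_⟩
              rw [if_pos hheavy]
            · by_cases hec' : e = c'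
              · rw [hec']
                have hufil : u ∉ (Finset.univ.filter fun x => g0 x = c').erase w := by
                  intro hmem
                  have := (Finset.mem_filter.mp (Finset.mem_erase.mp hmem).2).2
                  rw [← hc] at this
                  exact hc'c this.symm
                have h1 : cnt g1 c'
                    = (insert u ((Finset.univ.filter fun x => g0 x = c').erase w)).card := by
                  refine hcnt_eq g1 c' _ fun x => ?_
                  simp only [Finset.mem_insert, Finset.mem_erase, Finset.mem_filter,
                    Finset.mem_univ, true_and]
                  by_cases hx : x = u
                  · subst hx; rw [hv1]; exact ⟨fun _ => Or.inl rfl, fun _ => rfl⟩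
                  · by_cases hxw : x = w
                    · subst hxw
                      rw [hvw]
                      constructor
                      · intro h; exact absurd h.symm hc'c
                      · rintro (rfl | ⟨h, _⟩)
                        · exact absurd rfl hx
                        · exact absurd rfl h
                    · rw [hv2 x hx hxw]
                      constructor
                      · intro h; exact Or.inr ⟨hxw, h⟩
                      · rintro (rfl | ⟨_, h⟩)
                        · exact absurd rfl hx
                        · exact h
                have hwfil : w ∈ Finset.univ.filter (fun x => g0 x = c') :=
                  Finset.mem_filter.mpr ⟨Finset.mem_univ _, hww⟩
                have h2 : cnt g1 c' = cnt g0 c' := by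
                  rw [h1, Finset.card_insert_of_notMem hufil, Finset.card_erase_of_mem hwfil]
                  have h3 : 1 ≤ cnt g0 c' := Nat.pos_of_ne_zero hcnt0
                  unfold cnt at h3 ⊢
                  omega
                rw [h2]; exact hPg0.2 c'
              · have h1 : cnt g1 e = cnt g0 e := by
                  refine hcnt_eq g1 e (Finset.univ.filter fun x => g0 x = e) fun x => ?_
                  simp only [Finset.mem_filter, Finset.mem_univ, true_and]
                  by_cases hx : x = u
                  · subst hx
                    rw [hv1]
                    constructor
                    · intro h; exact absurd h.symm hec'
                    · intro h; rw [← hc] at h; exact absurd h.symm hec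
                  · by_cases hxw : x = w
                    · subst hxw
                      rw [hvw]
                      constructor
                      · intro h; exact absurd h.symm hec
                      · intro h; rw [hww] at h; exact absurd h.symm hec'
                    · rw [hv2 x hx hxw]
                rw [h1]; exact hPg0.2 e
        refine himp g1 hP1 ?_
        rintro ⟨x, y⟩ hq
        have hq' := Finset.mem_filter.mp hq
        have hxy : G.Adj x y := hq'.2.1
        have hgeq : g1 x = g1 y := hq'.2.2
        have hxu : x ≠ u := by
          intro hxeq
          rw [hxeq] at hgeq hxy
          have hyu : y ≠ u := (G.ne_of_adj hxy).symm
          rw [hv1] at hgeq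
          by_cases hyw : y = w
          · rw [hyw] at hgeq; rw [hvw] at hgeq; exact hc'c hgeq
          · rw [hv2 y hyu hyw] at hgeq
            have hyNu : y ∈ G.neighborFinset u := (SimpleGraph.mem_neighborFinset _ _ _).mpr hxy
            have hyv : y ≠ v := by
              intro hyeq
              rw [hyeq, ← heq] at hgeq
              exact hc'c hgeq
            exact huntainted y hyNu hyv hgeq.symm
        have hyu : y ≠ u := by
          intro hyeq
          rw [hyeq] at hgeq hxy
          have hxu' : x ≠ u := G.ne_of_adj hxy
          rw [hv1] at hgeq
          by_cases hxw : x = w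
          · rw [hxw, hvw] at hgeq; exact hc'c hgeq.symm
          · rw [hv2 x hxu' hxw] at hgeq
            have hxNu : x ∈ G.neighborFinset u := (SimpleGraph.mem_neighborFinset _ _ _).mpr hxy.symm
            have hxv : x ≠ v := by
              intro hxeq
              rw [hxeq, ← heq] at hgeq
              exact hc'c hgeq.symm
            exact huntainted x hxNu hxv hgeq
        have hxw : x ≠ w := by
          intro hxeq
          rw [hxeq] at hgeq hxy
          rw [hvw] at hgeq
          have hyw : y ≠ w := (G.ne_of_adj hxy).symm
          rw [hv2 y hyu hyw] at hgeq
          rcases (hcarr' y).mp hgeq.symm with h | h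
          · exact hyu h
          · rw [h] at hxy
            exact hwNv ((SimpleGraph.mem_neighborFinset _ _ _).mpr hxy.symm)
        have hyw : y ≠ w := by
          intro hyeq
          rw [hyeq] at hgeq hxy
          rw [hvw] at hgeq
          have hxw' : x ≠ w := G.ne_of_adj hxy
          rw [hv2 x hxu hxw'] at hgeq
          rcases (hcarr' x).mp hgeq with h | h
          · exact hxu h
          · rw [h] at hxy
            exact hwNv ((SimpleGraph.mem_neighborFinset _ _ _).mpr hxy)
        rw [hv2 x hxu hxw, hv2 y hyu hyw] at hgeq
        refine ⟨Finset.mem_filter.mpr ⟨Finset.mem_univ _, hxy, hgeq⟩, fun hcontr => ?_⟩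
        exact hxu (congrArg Prod.fst hcontr)
    -- derive the contradiction by counting
    set BadV := (G.neighborFinset v \ {u}) ∪ (Finset.univ.filter fun w => c ∉ L w) with hBadV
    have hGdBad : Gd.card ≤ BadV.card := by
      rw [← Finset.card_attach (s := Gd)]
      refine Finset.card_le_card_of_injOn (fun x => Classical.choose (hkey x.1 x.2)) ?_ ?_
      · intro a _
        dsimp only
        obtain ⟨h1, h2⟩ := Classical.choose_spec (hkey a.1 a.2)
        rcases h2 with h2 | h2
        · exact Finset.mem_union_right _ (Finset.mem_filter.mpr ⟨Finset.mem_univ _, h2⟩)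
        · refine Finset.mem_union_left _ (Finset.mem_sdiff.mpr ⟨h2, ?_⟩)
          rw [Finset.mem_singleton]
          intro hW
          have ha : a.1 ≠ c := fun h =>
            (Finset.mem_sdiff.mp a.2).2 (Finset.mem_insert.mpr (Or.inl h))
          rw [hW] at h1
          exact ha (by rw [← h1, ← hc])
      · intro a _ b _ hab
        dsimp only at hab
        have h1 := (Classical.choose_spec (hkey a.1 a.2)).1
        have h2 := (Classical.choose_spec (hkey b.1 b.2)).1
        have h3 : a.1 = b.1 := by rw [← h1, ← h2]; exact congrArg g0 hab
        exact Subtype.ext h3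
    have hBadcard : BadV.card ≤ (G.neighborFinset v \ {u}).card
        + (Finset.univ.filter fun w => c ∉ L w).card := Finset.card_union_le _ _
    have hNvcard : (G.neighborFinset v \ {u}).card ≤ Δ - 1 := by
      have huNv : u ∈ G.neighborFinset v := (SimpleGraph.mem_neighborFinset _ _ _).mpr hadj.symm
      have h1 : (G.neighborFinset v \ {u}).card = (G.neighborFinset v).card - 1 := by
        rw [Finset.card_sdiff_of_subset (Finset.singleton_subset_iff.mpr huNv), Finset.card_singleton]
      have h2 : (G.neighborFinset v).card ≤ Δ := G.degree_le_maxDegree v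
      omega
    have hnotL : (Finset.univ.filter fun w => c ∉ L w).card = n - eta L c := by
      rw [Finset.filter_not, Finset.card_sdiff_of_subset (Finset.filter_subset _ _), Finset.card_univ]
      rfl
    have hηc : eta L c ≤ n := hηn c
    omega
  -- ## assemble the proportional coloring
  refine ⟨g0, hPg0.1, ?_, ?_⟩
  · intro a b hab hcontra
    have hmem : (a, b) ∈ Bd g0 :=
      Finset.mem_filter.mpr ⟨Finset.mem_univ _, hab, hcontra⟩
    rw [Finset.card_eq_zero] at hB0
    rw [hB0] at hmem
    exact absurd hmem (Finset.notMem_empty _)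
  · intro cc hcc
    obtain ⟨v', hv'⟩ := hcc
    have hη1 : 1 ≤ eta L cc :=
      Finset.card_pos.mpr ⟨v', Finset.mem_filter.mpr ⟨Finset.mem_univ _, hv'⟩⟩
    have hηcc : eta L cc ≤ n := hηn cc
    have hlo := (hPg0.2 cc).1
    have hhi := (hPg0.2 cc).2
    have hgoal : (Finset.univ.filter fun v => g0 v = cc).card = cnt g0 cc := rfl
    rw [hgoal]
    by_cases h1 : eta L cc < k
    · rw [if_neg (by omega)] at hhi
      have hdiv : eta L cc / k = 0 := Nat.div_eq_of_lt h1
      have hceil : (eta L cc + k - 1) / k = 1 :=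
        Nat.div_eq_of_lt_le (by omega) (by omega)
      rcases Nat.le_one_iff_eq_zero_or_eq_one.mp hhi with h | h
      · exact Or.inl (by omega)
      · exact Or.inr (by omega)
    · push_neg at h1
      have hlo' := hlo h1
      by_cases h2 : k < eta L cc
      · rw [if_pos h2] at hhi
        have hdiv : eta L cc / k = 1 :=
          Nat.div_eq_of_lt_le (by omega) (by omega)
        have hceil : (eta L cc + k - 1) / k = 2 :=
          Nat.div_eq_of_lt_le (by omega) (by omega)
        interval_cases h : cnt g0 cc
        · exact Or.inl (by omega)
        · exact Or.inr (by omega)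
      · have h2' : eta L cc = k := by omega
        rw [if_neg h2] at hhi
        have hdiv : eta L cc / k = 1 := by
          rw [h2', Nat.div_self hk0]
        exact Or.inl (by omega)
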